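/- For all k ≥ 5 and n ≥ 2k, ar(𝒪_n, M_k) ≥ n + 2k - 6; that is, there exists a maximal outerplanar graph G on n vertices and a surjective edge-coloring of G using n + 2k - 6 colors with no rainbow matching of size k. -/

import Mathlib

open SimpleGraph

/-- `H` is a minor of `G`: disjoint nonempty connected branch sets, one per vertex of `H`,
with an edge of `G` between branch sets corresponding to each edge of `H`. -/
def HasMinor {V W : Type*} (G : SimpleGraph V) (H : SimpleGraph W) : Prop :=
  ∃ f : W → Set V,
    (∀ w, (f w).Nonempty) ∧
    (∀ w, (G.induce (f w)).Connected) ∧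
    (Pairwise fun w₁ w₂ => Disjoint (f w₁) (f w₂)) ∧
    ∀ ⦃w₁ w₂⦄, H.Adj w₁ w₂ → ∃ v₁ ∈ f w₁, ∃ v₂ ∈ f w₂, G.Adj v₁ v₂

/-- A graph is outerplanar iff it has no `K₄`-minor and no `K_{2,3}`-minor. -/
def Outerplanar {V : Type*} (G : SimpleGraph V) : Prop :=
  ¬ HasMinor G (completeGraph (Fin 4)) ∧
  ¬ HasMinor G (completeBipartiteGraph (Fin 2) (Fin 3))

/-- A maximal outerplanar graph: outerplanar and no edge can be added keeping outerplanarity. -/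
def MaximalOuterplanar {V : Type*} (G : SimpleGraph V) : Prop :=
  Outerplanar G ∧ ∀ u v : V, u ≠ v → ¬ G.Adj u v →
    ¬ Outerplanar (G ⊔ fromEdgeSet {s(u, v)})

/-- `M` is a matching (a set of pairwise disjoint edges) of the graph `G`. -/
def IsMatchingSet {V : Type*} (G : SimpleGraph V) (M : Finset (Sym2 V)) : Prop :=
  (∀ e ∈ M, e ∈ G.edgeSet) ∧
  ∀ e ∈ M, ∀ f ∈ M, e ≠ f → ∀ v : V, v ∈ e → v ∉ f

/-- `M` is a rainbow matching of size `k` in `G` under edge-coloring `c`. -/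
def IsRainbowMatching {V : Type*} (G : SimpleGraph V) (c : Sym2 V → ℕ) (k : ℕ)
    (M : Finset (Sym2 V)) : Prop :=
  IsMatchingSet G M ∧ M.card = k ∧ Set.InjOn c ↑M


section Aux
variable {n k : ℕ}
def Fan (n : ℕ) : SimpleGraph (Fin n) where
  Adj u v := u ≠ v ∧ (u.val = 0 ∨ v.val = 0 ∨ u.val + 1 = v.val ∨ v.val + 1 = u.val)
  symm := by constructor; intro u v h; exact ⟨h.1.symm, by tauto⟩
  loopless := by constructor; intro u h; exact h.1 rfl

variable {n : ℕ}

lemma fan_step {x y : Fin n} (h : (Fan n).Adj x y) (hx : x.val ≠ 0) (hy : y.val ≠ 0) :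
    x.val + 1 = y.val ∨ y.val + 1 = x.val := by
  rcases h.2 with h | h | h | h <;> tauto

def NZ (s : Set (Fin n)) : Prop := ∀ x ∈ s, (x : Fin n).val ≠ 0

def IsIval (s : Set (Fin n)) : Prop :=
  ∀ a ∈ s, ∀ b ∈ s, ∀ c : Fin n, (a : Fin n).val ≤ c.val → c.val ≤ (b : Fin n).val → c ∈ s

lemma walk_ivt {s : Set (Fin n)} (h0 : NZ s) {a b : ↥s}
    (p : ((Fan n).induce s).Walk a b) :
    ∀ c : ℕ, (a : Fin n).val ≤ c → c ≤ (b : Fin n).val → ∃ y ∈ s, (y : Fin n).val = c := by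
  induction p with
  | nil =>
    intro c h1 h2
    exact ⟨_, Subtype.coe_prop _, le_antisymm h1 h2⟩
  | @cons u x w h p ih =>
    intro c h1 h2
    rcases eq_or_lt_of_le h1 with h1 | h1
    · exact ⟨_, u.2, h1⟩
    · have hadj : (Fan n).Adj u x := h
      have := fan_step hadj (h0 _ u.2) (h0 _ x.2)
      exact ih c (by omega) h2

lemma ival_of_connected {s : Set (Fin n)} (h0 : NZ s)
    (hc : ((Fan n).induce s).Connected) : IsIval s := by
  intro a ha b hb c h1 h2
  obtain ⟨p⟩ := hc.preconnected ⟨a, ha⟩ ⟨b, hb⟩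
  obtain ⟨y, hy, hyv⟩ := walk_ivt h0 p c.val h1 h2
  have : y = c := Fin.ext hyv
  exact this ▸ hy

def Before (A B : Set (Fin n)) : Prop := ∀ x ∈ A, ∀ y ∈ B, (x : Fin n).val < (y : Fin n).val

lemma before_aux {A B : Set (Fin n)} (hA : IsIval A) (hB : IsIval B) (hd : Disjoint A B)
    {x0 y0 : Fin n} (hx0 : x0 ∈ A) (hy0 : y0 ∈ B) (hlt : x0.val < y0.val) : Before A B := by
  have key : ∀ x ∈ A, (x : Fin n).val < y0.val := by
    intro x hx
    by_contra h
    push_neg at h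
    exact (Set.disjoint_left.1 hd (hA x0 hx0 x hx y0 (le_of_lt hlt) h)) hy0
  intro x hx y hy
  by_contra h
  push_neg at h
  exact (Set.disjoint_left.1 hd hx) (hB y hy y0 hy0 x h (le_of_lt (key x hx)))

lemma before_total {A B : Set (Fin n)} (hA : IsIval A) (hB : IsIval B) (hd : Disjoint A B)
    (hAn : A.Nonempty) (hBn : B.Nonempty) : Before A B ∨ Before B A := by
  obtain ⟨x0, hx0⟩ := hAn
  obtain ⟨y0, hy0⟩ := hBn
  have hne : x0 ≠ y0 := fun h => (Set.disjoint_left.1 hd hx0) (h ▸ hy0)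
  rcases lt_or_gt_of_ne (fun h : x0.val = y0.val => hne (Fin.ext h)) with h | h
  · exact Or.inl (before_aux hA hB hd hx0 hy0 h)
  · exact Or.inr (before_aux hB hA hd.symm hy0 hx0 h)

def AdjSets (A B : Set (Fin n)) : Prop := ∃ x ∈ A, ∃ y ∈ B, (Fan n).Adj x y

lemma adjSets_symm {A B : Set (Fin n)} (h : AdjSets A B) : AdjSets B A := by
  obtain ⟨x, hx, y, hy, h⟩ := h
  exact ⟨y, hy, x, hx, h.symm⟩

lemma blocked {A B C : Set (Fin n)} (h1 : Before A B) (h2 : Before B C) (hBn : B.Nonempty)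
    (hA : NZ A) (hC : NZ C) : ¬ AdjSets A C := by
  rintro ⟨x, hx, y, hy, hadj⟩
  obtain ⟨b, hb⟩ := hBn
  have l1 := h1 x hx b hb
  have l2 := h2 b hb y hy
  have := fan_step hadj (hA _ hx) (hC _ hy)
  omega

lemma singleton_connected (G : SimpleGraph (Fin n)) (v : Fin n) :
    (G.induce {v}).Connected := by
  haveI : Nonempty ↥({v} : Set (Fin n)) := ⟨⟨v, rfl⟩⟩
  constructor
  intro a b
  have : a = b := Subtype.ext (by
    have ha : (a : Fin n) ∈ ({v} : Set (Fin n)) := a.2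
    have hb : (b : Fin n) ∈ ({v} : Set (Fin n)) := b.2
    simp only [Set.mem_singleton_iff] at ha hb
    rw [ha, hb])
  exact this ▸ Reachable.refl _

lemma ival_connected {s : Set (Fin n)} (hs : IsIval s) (hn : s.Nonempty) :
    ((Fan n).induce s).Connected := by
  have key : ∀ d : ℕ, ∀ x y : ↥s, (y : Fin n).val = (x : Fin n).val + d →
      ((Fan n).induce s).Reachable x y := by
    intro d
    induction d with
    | zero =>
      intro x y h
      have : x = y := Subtype.ext (Fin.ext (by omega))
      exact this ▸ Reachable.refl _
    | succ d ih =>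
      intro x y h
      have hlt : (x : Fin n).val + 1 < n := by
        have := (y : Fin n).isLt; omega
      set x' : Fin n := ⟨(x : Fin n).val + 1, hlt⟩ with hx'
      have hx's : x' ∈ s := hs _ x.2 _ y.2 x' (by simp [hx']) (by show (x : Fin n).val + 1 ≤ (y : Fin n).val; omega)
      have hne : (x : Fin n) ≠ x' := by
        intro hc
        have := congrArg Fin.val hc
        simp [hx'] at this
      have hadj : ((Fan n).induce s).Adj x ⟨x', hx's⟩ := ⟨hne, Or.inr (Or.inr (Or.inl rfl))⟩
      exact hadj.reachable.trans (ih ⟨x', hx's⟩ y (by simp [hx']; omega))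
  haveI : Nonempty ↥s := ⟨⟨hn.choose, hn.choose_spec⟩⟩
  constructor
  intro x y
  rcases le_total (x : Fin n).val (y : Fin n).val with h | h
  · exact key ((y : Fin n).val - (x : Fin n).val) x y (by omega)
  · exact (key ((x : Fin n).val - (y : Fin n).val) y x (by omega)).symm

abbrev HasMinor' {V W : Type*} (G : SimpleGraph V) (H : SimpleGraph W) : Prop :=
  ∃ f : W → Set V,
    (∀ w, (f w).Nonempty) ∧
    (∀ w, (G.induce (f w)).Connected) ∧
    (Pairwise fun w₁ w₂ => Disjoint (f w₁) (f w₂)) ∧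
    ∀ ⦃w₁ w₂⦄, H.Adj w₁ w₂ → ∃ v₁ ∈ f w₁, ∃ v₂ ∈ f w₂, G.Adj v₁ v₂

lemma nz_of_not_mem {s : Set (Fin n)} (hn : 0 < n) (h : (⟨0, hn⟩ : Fin n) ∉ s) : NZ s := by
  intro x hx hx0
  exact h (by rwa [show (⟨0, hn⟩ : Fin n) = x from (Fin.ext hx0.symm)])

/-- three pairwise disjoint, pairwise adjacent intervals avoiding 0 : impossible -/
lemma three_ivals {A B C : Set (Fin n)} (hA : IsIval A) (hB : IsIval B) (hC : IsIval C)
    (hAn : A.Nonempty) (hBn : B.Nonempty) (hCn : C.Nonempty)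
    (hAz : NZ A) (hBz : NZ B) (hCz : NZ C)
    (dAB : Disjoint A B) (dAC : Disjoint A C) (dBC : Disjoint B C)
    (aAB : AdjSets A B) (aAC : AdjSets A C) (aBC : AdjSets B C) : False := by
  rcases before_total hA hB dAB hAn hBn with h1 | h1 <;>
  rcases before_total hA hC dAC hAn hCn with h2 | h2 <;>
  rcases before_total hB hC dBC hBn hCn with h3 | h3
  · exact blocked h1 h3 hBn hAz hCz aAC
  · exact blocked h2 h3 hCn hAz hBz aAB
  · exact blocked h1 h3 hBn hAz hCz aAC
  · exact blocked h2 h1 hAn hCz hBz (adjSets_symm aBC)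
  · exact blocked h1 h2 hAn hBz hCz aBC
  · exact blocked h3 h1 hBn hCz hAz (adjSets_symm aAC)
  · exact blocked h3 h2 hCn hBz hAz (adjSets_symm aAB)
  · exact blocked h3 h1 hBn hCz hAz (adjSets_symm aAC)

lemma no_K4 (hn : 0 < n) : ¬ HasMinor' (Fan n) (completeGraph (Fin 4)) := by
  rintro ⟨f, hne, hconn, hdisj, hadj⟩
  set z : Fin n := ⟨0, hn⟩ with hz
  have hone : ∀ i j : Fin 4, i ≠ j → z ∈ f i → z ∉ f j := by
    intro i j hij hi hj
    exact Set.disjoint_left.1 (hdisj hij) hi hj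
  have pick : ∃ a b c : Fin 4, a ≠ b ∧ a ≠ c ∧ b ≠ c ∧ z ∉ f a ∧ z ∉ f b ∧ z ∉ f c := by
    by_cases h0 : z ∈ f 0
    · exact ⟨1, 2, 3, by decide, by decide, by decide,
        hone 0 1 (by decide) h0, hone 0 2 (by decide) h0, hone 0 3 (by decide) h0⟩
    · by_cases h1 : z ∈ f 1
      · exact ⟨0, 2, 3, by decide, by decide, by decide,
          h0, hone 1 2 (by decide) h1, hone 1 3 (by decide) h1⟩
      · by_cases h2 : z ∈ f 2
        · exact ⟨0, 1, 3, by decide, by decide, by decide, h0, h1, hone 2 3 (by decide) h2⟩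
        · exact ⟨0, 1, 2, by decide, by decide, by decide, h0, h1, h2⟩
  obtain ⟨a, b, c, hab, hac, hbc, ha, hb, hc⟩ := pick
  have nza := nz_of_not_mem hn ha
  have nzb := nz_of_not_mem hn hb
  have nzc := nz_of_not_mem hn hc
  have adjAB : AdjSets (f a) (f b) := by
    obtain ⟨x, hx, y, hy, h⟩ := hadj (by simpa [completeGraph] using hab)
    exact ⟨x, hx, y, hy, h⟩
  have adjAC : AdjSets (f a) (f c) := by
    obtain ⟨x, hx, y, hy, h⟩ := hadj (by simpa [completeGraph] using hac)
    exact ⟨x, hx, y, hy, h⟩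
  have adjBC : AdjSets (f b) (f c) := by
    obtain ⟨x, hx, y, hy, h⟩ := hadj (by simpa [completeGraph] using hbc)
    exact ⟨x, hx, y, hy, h⟩
  exact three_ivals (ival_of_connected nza (hconn a)) (ival_of_connected nzb (hconn b))
    (ival_of_connected nzc (hconn c)) (hne a) (hne b) (hne c) nza nzb nzc
    (hdisj hab) (hdisj hac) (hdisj hbc) adjAB adjAC adjBC

lemma exit_right {A : Set (Fin n)} (hA : IsIval A) {x1 x2 y1 y2 : Fin n}
    (hx1 : x1 ∈ A) (hx2 : x2 ∈ A) (hy1 : y1 ∉ A) (hy2 : y2 ∉ A)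
    (h1 : y1.val = x1.val + 1) (h2 : y2.val = x2.val + 1) : y1 = y2 := by
  rcases lt_trichotomy y1.val y2.val with h | h | h
  · exact absurd (hA x1 hx1 x2 hx2 y1 (by omega) (by omega)) hy1
  · exact Fin.ext h
  · exact absurd (hA x2 hx2 x1 hx1 y2 (by omega) (by omega)) hy2

lemma exit_left {A : Set (Fin n)} (hA : IsIval A) {x1 x2 y1 y2 : Fin n}
    (hx1 : x1 ∈ A) (hx2 : x2 ∈ A) (hy1 : y1 ∉ A) (hy2 : y2 ∉ A)
    (h1 : x1.val = y1.val + 1) (h2 : x2.val = y2.val + 1) : y1 = y2 := by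
  rcases lt_trichotomy y1.val y2.val with h | h | h
  · exact absurd (hA x1 hx1 x2 hx2 y2 (by omega) (by omega)) hy2
  · exact Fin.ext h
  · exact absurd (hA x2 hx2 x1 hx1 y1 (by omega) (by omega)) hy1

/-- an interval avoiding 0 cannot be adjacent to three pairwise disjoint sets avoiding 0
that are also disjoint from it -/
lemma caseHub {A B1 B2 B3 : Set (Fin n)} (hA : IsIval A) (nzA : NZ A)
    (nz1 : NZ B1) (nz2 : NZ B2) (nz3 : NZ B3)
    (d1 : Disjoint A B1) (d2 : Disjoint A B2) (d3 : Disjoint A B3)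
    (d12 : Disjoint B1 B2) (d13 : Disjoint B1 B3) (d23 : Disjoint B2 B3)
    (a1 : AdjSets A B1) (a2 : AdjSets A B2) (a3 : AdjSets A B3) : False := by
  obtain ⟨x1, hx1, y1, hy1, adj1⟩ := a1
  obtain ⟨x2, hx2, y2, hy2, adj2⟩ := a2
  obtain ⟨x3, hx3, y3, hy3, adj3⟩ := a3
  have ny1 : y1 ∉ A := fun h => Set.disjoint_left.1 d1 h hy1
  have ny2 : y2 ∉ A := fun h => Set.disjoint_left.1 d2 h hy2
  have ny3 : y3 ∉ A := fun h => Set.disjoint_left.1 d3 h hy3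
  have s1 := fan_step adj1 (nzA _ hx1) (nz1 _ hy1)
  have s2 := fan_step adj2 (nzA _ hx2) (nz2 _ hy2)
  have s3 := fan_step adj3 (nzA _ hx3) (nz3 _ hy3)
  rcases s1 with s1 | s1 <;> rcases s2 with s2 | s2 <;> rcases s3 with s3 | s3
  · exact Set.disjoint_left.1 d12 hy1 ((exit_right hA hx1 hx2 ny1 ny2 s1.symm s2.symm) ▸ hy2)
  · exact Set.disjoint_left.1 d12 hy1 ((exit_right hA hx1 hx2 ny1 ny2 s1.symm s2.symm) ▸ hy2)
  · exact Set.disjoint_left.1 d13 hy1 ((exit_right hA hx1 hx3 ny1 ny3 s1.symm s3.symm) ▸ hy3)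
  · exact Set.disjoint_left.1 d23 hy2 ((exit_left hA hx2 hx3 ny2 ny3 s2.symm s3.symm) ▸ hy3)
  · exact Set.disjoint_left.1 d23 hy2 ((exit_right hA hx2 hx3 ny2 ny3 s2.symm s3.symm) ▸ hy3)
  · exact Set.disjoint_left.1 d13 hy1 ((exit_left hA hx1 hx3 ny1 ny3 s1.symm s3.symm) ▸ hy3)
  · exact Set.disjoint_left.1 d12 hy1 ((exit_left hA hx1 hx2 ny1 ny2 s1.symm s2.symm) ▸ hy2)
  · exact Set.disjoint_left.1 d12 hy1 ((exit_left hA hx1 hx2 ny1 ny2 s1.symm s2.symm) ▸ hy2)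

lemma aux1 {A1 A2 P Q : Set (Fin n)}
    (hA1 : IsIval A1) (hA2 : IsIval A2) (hP : IsIval P) (hQ : IsIval Q)
    (nA1 : A1.Nonempty) (nA2 : A2.Nonempty) (nP : P.Nonempty) (nQ : Q.Nonempty)
    (zA1 : NZ A1) (zA2 : NZ A2) (zP : NZ P) (zQ : NZ Q)
    (dPA1 : Disjoint P A1) (dPA2 : Disjoint P A2) (dQA1 : Disjoint Q A1)
    (dQA2 : Disjoint Q A2) (dPQ : Disjoint P Q)
    (a1P : AdjSets A1 P) (a1Q : AdjSets A1 Q) (a2P : AdjSets A2 P) (a2Q : AdjSets A2 Q)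
    (h12 : Before A1 A2) : False := by
  rcases before_total hP hA1 dPA1 nP nA1 with h | hP1
  · exact blocked h h12 nA1 zP zA2 (adjSets_symm a2P)
  rcases before_total hP hA2 dPA2 nP nA2 with hP2 | h
  · rcases before_total hQ hA1 dQA1 nQ nA1 with h | hQ1
    · exact blocked h h12 nA1 zQ zA2 (adjSets_symm a2Q)
    rcases before_total hQ hA2 dQA2 nQ nA2 with hQ2 | h
    · rcases before_total hP hQ dPQ nP nQ with h | h
      · exact blocked hP1 h nP zA1 zQ a1Q
      · exact blocked hQ1 h nQ zA1 zP a1P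
    · exact blocked h12 h nA2 zA1 zQ a1Q
  · exact blocked h12 h nA2 zA1 zP a1P

lemma no_K23 (hn : 0 < n) : ¬ HasMinor' (Fan n) (completeBipartiteGraph (Fin 2) (Fin 3)) := by
  rintro ⟨f, hne, hconn, hdisj, hadj⟩
  set z : Fin n := ⟨0, hn⟩ with hz
  set A : Fin 2 → Set (Fin n) := fun i => f (Sum.inl i) with hA
  set B : Fin 3 → Set (Fin n) := fun j => f (Sum.inr j) with hB
  have adjAB : ∀ i j, AdjSets (A i) (B j) := by
    intro i j
    obtain ⟨x, hx, y, hy, h⟩ := hadj (show (completeBipartiteGraph (Fin 2) (Fin 3)).Adj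
      (Sum.inl i) (Sum.inr j) by simp)
    exact ⟨x, hx, y, hy, h⟩
  have dAB : ∀ i j, Disjoint (A i) (B j) := fun i j => hdisj (by simp)
  have dBB : ∀ j j' : Fin 3, j ≠ j' → Disjoint (B j) (B j') := fun j j' h =>
    hdisj (by simpa using h)
  have dAA : ∀ i i' : Fin 2, i ≠ i' → Disjoint (A i) (A i') := fun i i' h =>
    hdisj (by simpa using h)
  have hub : ∀ i : Fin 2, z ∉ A i → (∀ j, z ∉ B j) → False := by
    intro i hAi hBz
    have nzA := nz_of_not_mem hn hAi
    have nz1 := nz_of_not_mem hn (hBz 0)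
    have nz2 := nz_of_not_mem hn (hBz 1)
    have nz3 := nz_of_not_mem hn (hBz 2)
    exact caseHub (ival_of_connected nzA (hconn _)) nzA nz1 nz2 nz3
      (dAB i 0) (dAB i 1) (dAB i 2)
      (dBB 0 1 (by decide)) (dBB 0 2 (by decide)) (dBB 1 2 (by decide))
      (adjAB i 0) (adjAB i 1) (adjAB i 2)
  by_cases h0 : z ∈ A 0
  · exact hub 1 (fun h => Set.disjoint_left.1 (dAA 0 1 (by decide)) h0 h)
      (fun j h => Set.disjoint_left.1 (dAB 0 j) h0 h)
  by_cases h1 : z ∈ A 1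
  · exact hub 0 h0 (fun j h => Set.disjoint_left.1 (dAB 1 j) h1 h)
  -- z not in A 0 or A 1; pick two B's avoiding z
  have main : ∀ p q : Fin 3, p ≠ q → z ∉ B p → z ∉ B q → False := by
    intro p q hpq hp hq
    have zA1 := nz_of_not_mem hn h0
    have zA2 := nz_of_not_mem hn h1
    have zP := nz_of_not_mem hn hp
    have zQ := nz_of_not_mem hn hq
    have iA1 := ival_of_connected zA1 (hconn _)
    have iA2 := ival_of_connected zA2 (hconn _)
    have iP := ival_of_connected zP (hconn _)
    have iQ := ival_of_connected zQ (hconn _)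
    rcases before_total iA1 iA2 (dAA 0 1 (by decide)) (hne _) (hne _) with h | h
    · exact aux1 iA1 iA2 iP iQ (hne _) (hne _) (hne _) (hne _) zA1 zA2 zP zQ
        (dAB 0 p).symm (dAB 1 p).symm (dAB 0 q).symm (dAB 1 q).symm (dBB p q hpq)
        (adjAB 0 p) (adjAB 0 q) (adjAB 1 p) (adjAB 1 q) h
    · exact aux1 iA2 iA1 iP iQ (hne _) (hne _) (hne _) (hne _) zA2 zA1 zP zQ
        (dAB 1 p).symm (dAB 0 p).symm (dAB 1 q).symm (dAB 0 q).symm (dBB p q hpq)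
        (adjAB 1 p) (adjAB 1 q) (adjAB 0 p) (adjAB 0 q) h
  by_cases hb0 : z ∈ B 0
  · exact main 1 2 (by decide) (fun h => Set.disjoint_left.1 (dBB 0 1 (by decide)) hb0 h)
      (fun h => Set.disjoint_left.1 (dBB 0 2 (by decide)) hb0 h)
  by_cases hb1 : z ∈ B 1
  · exact main 0 2 (by decide) hb0 (fun h => Set.disjoint_left.1 (dBB 1 2 (by decide)) hb1 h)
  · exact main 0 1 (by decide) hb0 hb1

lemma fan_k4_of_add {u v : Fin n} (hu : u.val ≠ 0) (hv : v.val ≠ 0)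
    (huv : u.val + 2 ≤ v.val) :
    HasMinor' (Fan n ⊔ fromEdgeSet {s(u, v)}) (completeGraph (Fin 4)) := by
  have hn : 0 < n := lt_of_le_of_lt (Nat.zero_le _) v.isLt
  set z : Fin n := ⟨0, hn⟩ with hz
  set w : Fin n := ⟨u.val + 1, by omega⟩ with hw
  set G' := Fan n ⊔ fromEdgeSet {s(u, v)} with hG'
  set I : Set (Fin n) := {x | u.val < x.val ∧ x.val < v.val} with hI
  have hIval : IsIval I := by
    rintro a ⟨ha1, ha2⟩ b ⟨hb1, hb2⟩ c h1 h2
    exact ⟨by omega, by omega⟩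
  have hwI : w ∈ I := ⟨by simp [hw], by simp [hw]; omega⟩
  have fanle : Fan n ≤ G' := le_sup_left
  refine ⟨![{z}, {u}, {v}, I], ?_, ?_, ?_, ?_⟩
  · intro i
    fin_cases i
    · exact ⟨z, rfl⟩
    · exact ⟨u, rfl⟩
    · exact ⟨v, rfl⟩
    · exact ⟨w, hwI⟩
  · intro i
    have mono : ∀ s : Set (Fin n), ((Fan n).induce s).Connected → (G'.induce s).Connected :=
      fun s h => h.mono (fun a b hab => Or.inl hab)
    fin_cases i
    · exact singleton_connected _ z
    · exact singleton_connected _ u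
    · exact singleton_connected _ v
    · exact mono I (ival_connected hIval ⟨w, hwI⟩)
  · have d01 : Disjoint ({z} : Set (Fin n)) {u} := by
      rw [Set.disjoint_singleton]
      intro h; apply congrArg Fin.val at h; simp [hz] at h; exact hu h.symm
    have d02 : Disjoint ({z} : Set (Fin n)) {v} := by
      rw [Set.disjoint_singleton]
      intro h; apply congrArg Fin.val at h; simp [hz] at h; exact hv h.symm
    have d12 : Disjoint ({u} : Set (Fin n)) {v} := by
      rw [Set.disjoint_singleton]
      intro h; apply congrArg Fin.val at h; omega
    have d03 : Disjoint ({z} : Set (Fin n)) I := by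
      rw [Set.disjoint_left]
      rintro x hx ⟨h1, h2⟩
      rw [Set.mem_singleton_iff] at hx
      apply congrArg Fin.val at hx; simp [hz] at hx; omega
    have d13 : Disjoint ({u} : Set (Fin n)) I := by
      rw [Set.disjoint_left]
      rintro x hx ⟨h1, h2⟩
      rw [Set.mem_singleton_iff] at hx
      apply congrArg Fin.val at hx; omega
    have d23 : Disjoint ({v} : Set (Fin n)) I := by
      rw [Set.disjoint_left]
      rintro x hx ⟨h1, h2⟩
      rw [Set.mem_singleton_iff] at hx
      apply congrArg Fin.val at hx; omega
    intro i j hij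
    fin_cases i <;> fin_cases j <;>
      first
      | exact absurd rfl hij
      | exact d01 | exact d01.symm | exact d02 | exact d02.symm
      | exact d12 | exact d12.symm | exact d03 | exact d03.symm
      | exact d13 | exact d13.symm | exact d23 | exact d23.symm
  · intro i j hij
    have hadjzu : G'.Adj z u := fanle ⟨by intro h; exact hu (by rw [← h]), Or.inl rfl⟩
    have hadjzv : G'.Adj z v := fanle ⟨by intro h; exact hv (by rw [← h]), Or.inl rfl⟩
    have hadjzw : G'.Adj z w := fanle ⟨by intro h; apply congrArg Fin.val at h; simp [hz, hw] at h, Or.inl rfl⟩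
    have hadjuv : G'.Adj u v := by
      right
      exact ⟨rfl, fun h => by apply congrArg Fin.val at h; omega⟩
    have hadjuw : G'.Adj u w := fanle ⟨by intro h; apply congrArg Fin.val at h; simp [hw] at h,
      Or.inr (Or.inr (Or.inl (by simp [hw])))⟩
    have hvw : v.val = (v.val - 1) + 1 := by omega
    set w2 : Fin n := ⟨v.val - 1, by omega⟩ with hw2
    have hw2I : w2 ∈ I := ⟨by simp [hw2]; omega, by simp [hw2]; omega⟩
    have hadjvw2 : G'.Adj v w2 := fanle ⟨by intro h; apply congrArg Fin.val at h; simp [hw2] at h; omega,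
      Or.inr (Or.inr (Or.inr (by simp [hw2]; omega)))⟩
    fin_cases i <;> fin_cases j <;>
      first
      | exact absurd rfl hij
      | exact ⟨z, rfl, u, rfl, hadjzu⟩
      | exact ⟨u, rfl, z, rfl, hadjzu.symm⟩
      | exact ⟨z, rfl, v, rfl, hadjzv⟩
      | exact ⟨v, rfl, z, rfl, hadjzv.symm⟩
      | exact ⟨z, rfl, w, hwI, hadjzw⟩
      | exact ⟨w, hwI, z, rfl, hadjzw.symm⟩
      | exact ⟨u, rfl, v, rfl, hadjuv⟩
      | exact ⟨v, rfl, u, rfl, hadjuv.symm⟩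
      | exact ⟨u, rfl, w, hwI, hadjuw⟩
      | exact ⟨w, hwI, u, rfl, hadjuw.symm⟩
      | exact ⟨v, rfl, w2, hw2I, hadjvw2⟩
      | exact ⟨w2, hw2I, v, rfl, hadjvw2.symm⟩

def fanColor (n k : ℕ) : Sym2 (Fin n) → ℕ :=
  Sym2.lift ⟨fun a b =>
    if max a.val b.val ≤ 2*k-5 ∨ min a.val b.val = 0 then (min a.val b.val) * n + max a.val b.val
    else n*n,
    by intro a b; simp [max_comm, min_comm]⟩

def colorSet (n k : ℕ) : Finset ℕ :=
  (Finset.Icc 1 (n-1) ∪ (Finset.Icc 1 (2*k-6)).image (fun i => i*n+i+1)) ∪ {n*n}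

lemma color_image (hk : 5 ≤ k) (hn : 2*k ≤ n) :
    fanColor n k '' (Fan n).edgeSet = ↑(colorSet n k) := by
  apply subset_antisymm
  · rintro x ⟨e, he, rfl⟩
    induction e using Sym2.inductionOn with
    | hf a b =>
    rw [SimpleGraph.mem_edgeSet] at he
    obtain ⟨hab, hor⟩ := he
    have hav := a.isLt
    have hbv := b.isLt
    have habv : a.val ≠ b.val := fun h => hab (Fin.ext h)
    simp only [fanColor, Sym2.lift_mk, colorSet, Finset.coe_union, Set.mem_union,
      Finset.coe_image, Set.mem_image, Finset.mem_coe, Finset.mem_Icc, Finset.coe_singleton,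
      Set.mem_singleton_iff]
    split_ifs with hcond
    · by_cases hmin : min a.val b.val = 0
      · left; left
        rw [hmin]
        simp only [Nat.zero_mul, Nat.zero_add]
        constructor <;> omega
      · left; right
        refine ⟨min a.val b.val, ⟨by omega, by omega⟩, ?_⟩
        have hmax : max a.val b.val = min a.val b.val + 1 := by omega
        rw [hmax]; ring
    · right; rfl
  · intro x hx
    simp only [colorSet, Finset.coe_union, Set.mem_union, Finset.coe_image, Set.mem_image,
      Finset.mem_coe, Finset.mem_Icc, Finset.coe_singleton, Set.mem_singleton_iff] at hx
    have hn0 : 0 < n := by omega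
    rcases hx with (⟨h1, h2⟩ | ⟨i, ⟨hi1, hi2⟩, rfl⟩) | rfl
    · refine ⟨s((⟨0, hn0⟩ : Fin n), (⟨x, by omega⟩ : Fin n)), ?_, ?_⟩
      · rw [SimpleGraph.mem_edgeSet]
        exact ⟨fun h => by apply congrArg Fin.val at h; simp at h; omega, Or.inl rfl⟩
      · simp only [fanColor, Sym2.lift_mk]
        rw [if_pos (by simp <;> omega)]
        simp
    · refine ⟨s((⟨i, by omega⟩ : Fin n), (⟨i+1, by omega⟩ : Fin n)), ?_, ?_⟩
      · rw [SimpleGraph.mem_edgeSet]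
        exact ⟨fun h => by apply congrArg Fin.val at h; simp at h,
          Or.inr (Or.inr (Or.inl rfl))⟩
      · simp only [fanColor, Sym2.lift_mk]
        rw [if_pos (by simp <;> omega)]
        have h1 : min i (i+1) = i := by omega
        have h2 : max i (i+1) = i+1 := by omega
        simp only [h1, h2]
        omega
    · refine ⟨s((⟨2*k-5, by omega⟩ : Fin n), (⟨2*k-4, by omega⟩ : Fin n)), ?_, ?_⟩
      · rw [SimpleGraph.mem_edgeSet]
        exact ⟨fun h => by apply congrArg Fin.val at h; simp at h; omega,
          Or.inr (Or.inr (Or.inl (by simp <;> omega)))⟩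
      · simp only [fanColor, Sym2.lift_mk]
        rw [if_neg (by simp <;> omega)]

lemma colorSet_card (hk : 5 ≤ k) (hn : 2*k ≤ n) : (colorSet n k).card = n + 2*k - 6 := by
  have himagele : ∀ i, 1 ≤ i → i ≤ 2*k-6 → n + 2 ≤ i*n+i+1 ∧ i*n+i+1 < n*n := by
    intro i h1 h2
    constructor
    · have : n ≤ i * n := Nat.le_mul_of_pos_left n (by omega)
      omega
    · have hi : i + 1 < n := by omega
      calc i*n+i+1 < i*n + n := by omega
        _ = (i+1)*n := by ring
        _ ≤ n*n := Nat.mul_le_mul_right n (by omega)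
  have hinj : Set.InjOn (fun i => i*n+i+1) ↑(Finset.Icc 1 (2*k-6)) := by
    intro i _ j _ h
    simp only at h
    have : i * (n+1) = j * (n+1) := by
      rw [Nat.mul_succ, Nat.mul_succ]; omega
    exact Nat.eq_of_mul_eq_mul_right (by omega) this
  have d1 : Disjoint (Finset.Icc 1 (n-1)) ((Finset.Icc 1 (2*k-6)).image (fun i => i*n+i+1)) := by
    rw [Finset.disjoint_left]
    intro x hx hx2
    simp only [Finset.mem_Icc] at hx
    simp only [Finset.mem_image, Finset.mem_Icc] at hx2
    obtain ⟨i, ⟨hi1, hi2⟩, rfl⟩ := hx2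
    have := himagele i hi1 hi2
    omega
  have d2 : Disjoint (Finset.Icc 1 (n-1) ∪ (Finset.Icc 1 (2*k-6)).image (fun i => i*n+i+1))
      ({n*n} : Finset ℕ) := by
    rw [Finset.disjoint_right]
    intro x hx hx2
    simp only [Finset.mem_singleton] at hx
    subst hx
    simp only [Finset.mem_union, Finset.mem_Icc, Finset.mem_image] at hx2
    have hnn : n ≤ n * n := Nat.le_mul_of_pos_left n (by omega)
    rcases hx2 with ⟨h1, h2⟩ | ⟨i, hi, h⟩
    · omega
    · have := himagele i hi.1 hi.2
      omega
  rw [colorSet, Finset.card_union_of_disjoint d2, Finset.card_union_of_disjoint d1,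
    Finset.card_image_of_injOn hinj]
  simp only [Nat.card_Icc, Finset.card_singleton]
  omega

def eFin : Sym2 (Fin n) → Finset (Fin n) :=
  Sym2.lift ⟨fun a b => {a, b}, fun a b => Finset.pair_comm a b⟩

lemma mem_eFin {x : Fin n} {e : Sym2 (Fin n)} : x ∈ eFin e ↔ x ∈ e := by
  induction e using Sym2.inductionOn with
  | hf a b => simp [eFin, Sym2.mem_iff]

lemma no_rainbow (hk : 5 ≤ k) (hn : 2*k ≤ n) :
    ¬ ∃ M, IsRainbowMatching (Fan n) (fanColor n k) k M := by
  classical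
  rintro ⟨M, ⟨hedge, hdisj⟩, hcard, hinj⟩
  have hn0 : 0 < n := by omega
  set z : Fin n := ⟨0, hn0⟩ with hz
  set p0 : Sym2 (Fin n) → Prop := fun e => z ∈ e with hp0
  set pB : Sym2 (Fin n) → Prop :=
    fun e => ∀ x ∈ eFin e, 1 ≤ (x : Fin n).val ∧ (x : Fin n).val ≤ 2*k-5 with hpB
  set M0 := M.filter p0 with hM0
  set Mr := M.filter (fun e => ¬ p0 e) with hMr
  set MB := Mr.filter pB with hMB
  set MC := Mr.filter (fun e => ¬ pB e) with hMC
  have hsplit1 : M0.card + Mr.card = M.card := Finset.card_filter_add_card_filter_not _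
  have hsplit2 : MB.card + MC.card = Mr.card := Finset.card_filter_add_card_filter_not _
  -- M0 has at most one edge
  have hM0le : M0.card ≤ 1 := by
    rw [Finset.card_le_one]
    intro e he f hf
    rw [hM0, Finset.mem_filter] at he hf
    by_contra hne
    exact hdisj e he.1 f hf.1 hne z he.2 hf.2
  -- every edge in MC has color n*n
  have hMCcol : ∀ e ∈ MC, fanColor n k e = n*n := by
    intro e he
    rw [hMC, hMr, Finset.mem_filter, Finset.mem_filter] at he
    obtain ⟨⟨heM, hez⟩, hepB⟩ := he
    have hee := hedge e heM
    induction e using Sym2.inductionOn with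
    | hf a b =>
    rw [SimpleGraph.mem_edgeSet] at hee
    have haz : a.val ≠ 0 := by
      intro h
      have hza : z = a := Fin.ext (by simp [hz, h])
      exact hez (by rw [hp0, hza]; exact Sym2.mem_mk_left a b)
    have hbz : b.val ≠ 0 := by
      intro h
      have hzb : z = b := Fin.ext (by simp [hz, h])
      exact hez (by rw [hp0, hzb]; exact Sym2.mem_mk_right a b)
    have hbig : ¬ (max a.val b.val ≤ 2*k-5) := by
      intro hmax
      apply hepB
      intro x hx
      rw [mem_eFin, Sym2.mem_iff] at hx
      rcases hx with rfl | rfl <;> omega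
    simp only [fanColor, Sym2.lift_mk]
    rw [if_neg (by omega)]
  have hMCle : MC.card ≤ 1 := by
    rw [Finset.card_le_one]
    intro e he f hf
    have heM : e ∈ M := Finset.mem_of_subset (Finset.filter_subset _ _)
      (Finset.mem_of_subset (Finset.filter_subset _ _) he)
    have hfM : f ∈ M := Finset.mem_of_subset (Finset.filter_subset _ _)
      (Finset.mem_of_subset (Finset.filter_subset _ _) hf)
    exact hinj heM hfM (by rw [hMCcol e he, hMCcol f hf])
  -- MB bound
  have hMBle : MB.card ≤ k - 3 := by
    have hdisjF : ∀ e ∈ MB, ∀ f ∈ MB, e ≠ f → Disjoint (eFin e) (eFin f) := by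
      intro e he f hf hne
      have heM : e ∈ M := Finset.mem_of_subset (Finset.filter_subset _ _)
        (Finset.mem_of_subset (Finset.filter_subset _ _) he)
      have hfM : f ∈ M := Finset.mem_of_subset (Finset.filter_subset _ _)
        (Finset.mem_of_subset (Finset.filter_subset _ _) hf)
      rw [Finset.disjoint_left]
      intro x hx hx2
      exact hdisj e heM f hfM hne x (mem_eFin.1 hx) (mem_eFin.1 hx2)
    have hcard2 : ∀ e ∈ MB, (eFin e).card = 2 := by
      intro e he
      have heM : e ∈ M := Finset.mem_of_subset (Finset.filter_subset _ _)
        (Finset.mem_of_subset (Finset.filter_subset _ _) he)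
      have hee := hedge e heM
      induction e using Sym2.inductionOn with
      | hf a b =>
      rw [SimpleGraph.mem_edgeSet] at hee
      simp only [eFin, Sym2.lift_mk]
      exact Finset.card_pair hee.1
    have hbU : (MB.biUnion eFin).card = 2 * MB.card := by
      rw [Finset.card_biUnion hdisjF]
      rw [Finset.sum_congr rfl hcard2]
      simp [Nat.mul_comm]
    have hsub : MB.biUnion eFin ⊆ Finset.univ.filter
        (fun x : Fin n => 1 ≤ x.val ∧ x.val ≤ 2*k-5) := by
      intro x hx
      rw [Finset.mem_biUnion] at hx
      obtain ⟨e, he, hxe⟩ := hx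
      rw [hMB, Finset.mem_filter] at he
      simp only [Finset.mem_filter, Finset.mem_univ, true_and]
      exact he.2 x hxe
    have hfilterle : (Finset.univ.filter
        (fun x : Fin n => 1 ≤ x.val ∧ x.val ≤ 2*k-5)).card ≤ 2*k-5 := by
      have : (Finset.univ.filter (fun x : Fin n => 1 ≤ x.val ∧ x.val ≤ 2*k-5)).card
          ≤ (Finset.Icc 1 (2*k-5)).card := by
        apply Finset.card_le_card_of_injOn (fun x => x.val)
        · intro x hx
          simp only [Finset.mem_coe, Finset.mem_filter] at hx
          simp only [Finset.mem_coe, Finset.mem_Icc]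
          exact hx.2
        · intro x _ y _ h
          exact Fin.ext h
      rw [Nat.card_Icc] at this
      omega
    have := Finset.card_le_card hsub
    rw [hbU] at this
    omega
  omega

end Aux

/-- `ar(𝒪ₙ, M_k) ≥ n + 2k - 6` for `k ≥ 5`, `n ≥ 2k`: some maximal outerplanar graph on
`n` vertices has a surjective edge-coloring with `n + 2k - 6` colors and no rainbow `M_k`. -/
theorem stmt11 (n k : ℕ) (hk : 5 ≤ k) (hn : 2 * k ≤ n) :
    ∃ (G : SimpleGraph (Fin n)) (c : Sym2 (Fin n) → ℕ), MaximalOuterplanar G ∧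
      (c '' G.edgeSet).ncard = n + 2 * k - 6 ∧ ¬ ∃ M, IsRainbowMatching G c k M := by
  have hn0 : 0 < n := by omega
  refine ⟨Fan n, fanColor n k, ⟨⟨no_K4 hn0, no_K23 hn0⟩, ?_⟩, ?_, no_rainbow hk hn⟩
  · intro u v hne hnadj hop
    have hval : u.val ≠ v.val := fun h => hne (Fin.ext h)
    have hfacts : ¬(u.val = 0 ∨ v.val = 0 ∨ u.val + 1 = v.val ∨ v.val + 1 = u.val) :=
      fun h => hnadj ⟨hne, h⟩
    push_neg at hfacts
    obtain ⟨h1, h2, h3, h4⟩ := hfacts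
    rcases lt_or_gt_of_ne hval with h | h
    · exact hop.1 (fan_k4_of_add h1 h2 (by omega))
    · rw [show s(u, v) = s(v, u) from Sym2.eq_swap] at hop
      exact hop.1 (fan_k4_of_add h2 h1 (by omega))
  · rw [color_image hk hn, Set.ncard_coe_finset, colorSet_card hk hn]
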